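/- There is a universal constant c > 0 such that for every d ≥ 3, every integer 1 ≤ k ≤ d, and every set Y with 1_d ∈ Y ⊆ { x ∈ {0,1}^d : ‖x‖₁ = k } ∪ { 1_d } (where 1_d is the all-ones vector), one has (E_η[ max_{x∈Y} x^⊤ η ])² ≤ c · ( k² · log d + d ). In particular, since A_semi of the point mass at 1_d equals the identity matrix and 1_d is the unique-or-tied optimal arm whenever θ* has nonnegative coordinates, taking k = ⌈√d⌉ yields a combinatorial semi-bandit instance in ℝ^d with k = ⌈√d⌉ whose worst-case Gaussian width γ̄(A_semi) is at most c′ · d · log d (the paper's Proposition 5). -/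

import Mathlib

open MeasureTheory ProbabilityTheory

/-- The standard Gaussian measure `N(0, I_d)` on `ℝ^d`. -/
noncomputable def stdGaussian (d : ℕ) : Measure (Fin d → ℝ) :=
  Measure.pi fun _ => gaussianReal 0 1


set_option maxHeartbeats 1000000
open Real
open scoped ENNReal NNReal

section Aux

lemma integral_gaussianReal_eq (g : ℝ → ℝ) :
    ∫ x, g x ∂(gaussianReal 0 1) = ∫ x, gaussianPDFReal 0 1 x • g x := by
  rw [gaussianReal_of_var_ne_zero 0 one_ne_zero]
  have h : gaussianPDF 0 1 = fun x => ((Real.toNNReal (gaussianPDFReal 0 1 x) : ℝ≥0) : ℝ≥0∞) :=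
    by funext x; rfl
  rw [h, integral_withDensity_eq_integral_smul ((measurable_gaussianPDFReal 0 1).real_toNNReal)]
  congr 1; funext x
  rw [NNReal.smul_def, Real.coe_toNNReal _ (gaussianPDFReal_nonneg 0 1 x), smul_eq_mul]

lemma gaussianPDFReal_zero_one (x : ℝ) :
    gaussianPDFReal 0 1 x = (Real.sqrt (2 * π))⁻¹ * Real.exp (-(1/2) * x^2) := by
  rw [gaussianPDFReal_def]
  norm_num
  left; ring

lemma pdf_exp_eq (a x : ℝ) :
    gaussianPDFReal 0 1 x * Real.exp (a * x)
      = ((Real.sqrt (2*π))⁻¹ * Real.exp (a^2/2)) * Real.exp (-(1/2) * (x - a)^2) := by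
  rw [gaussianPDFReal_zero_one, mul_assoc, mul_assoc, ← Real.exp_add, ← Real.exp_add]
  congr 1
  ring

lemma integrable_gaussianReal_exp_mul (a : ℝ) :
    Integrable (fun x => Real.exp (a * x)) (gaussianReal 0 1) := by
  rw [gaussianReal_of_var_ne_zero 0 one_ne_zero]
  have h : gaussianPDF 0 1 = fun x => ((Real.toNNReal (gaussianPDFReal 0 1 x) : ℝ≥0) : ℝ≥0∞) :=
    by funext x; rfl
  rw [h, integrable_withDensity_iff_integrable_smul
    ((measurable_gaussianPDFReal 0 1).real_toNNReal)]
  have : (fun x => (Real.toNNReal (gaussianPDFReal 0 1 x) : ℝ≥0) • Real.exp (a * x))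
      = fun x => ((Real.sqrt (2*π))⁻¹ * Real.exp (a^2/2)) * Real.exp (-(1/2) * (x - a)^2) := by
    funext x
    rw [NNReal.smul_def, Real.coe_toNNReal _ (gaussianPDFReal_nonneg 0 1 x), smul_eq_mul,
      pdf_exp_eq]
  rw [this]
  exact (((integrable_exp_neg_mul_sq (by norm_num : (0:ℝ) < 1/2)).comp_sub_right a)).const_mul _

lemma gaussian_mgf (a : ℝ) :
    ∫ x, Real.exp (a * x) ∂(gaussianReal 0 1) = Real.exp (a^2/2) := by
  rw [integral_gaussianReal_eq]
  have h1 : (fun x => gaussianPDFReal 0 1 x • Real.exp (a * x))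
      = fun x => ((Real.sqrt (2*π))⁻¹ * Real.exp (a^2/2)) * Real.exp (-(1/2) * (x - a)^2) := by
    funext x; rw [smul_eq_mul, pdf_exp_eq]
  rw [h1, integral_const_mul]
  have h2 : ∫ x : ℝ, Real.exp (-(1/2) * (x - a)^2) = ∫ x : ℝ, Real.exp (-(1/2) * x^2) :=
    integral_sub_right_eq_self (fun x => Real.exp (-(1/2) * x^2)) a
  rw [h2, integral_gaussian]
  have h3 : Real.sqrt (π / (1/2)) = Real.sqrt (2 * π) := by
    congr 1; ring
  rw [h3]
  have hpos : Real.sqrt (2 * π) ≠ 0 := by positivity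
  field_simp

lemma integrable_gaussianReal_id : Integrable (fun x : ℝ => x) (gaussianReal 0 1) := by
  rw [gaussianReal_of_var_ne_zero 0 one_ne_zero]
  have h : gaussianPDF 0 1 = fun x => ((Real.toNNReal (gaussianPDFReal 0 1 x) : ℝ≥0) : ℝ≥0∞) :=
    by funext x; rfl
  rw [h, integrable_withDensity_iff_integrable_smul
    ((measurable_gaussianPDFReal 0 1).real_toNNReal)]
  have hb : ∀ x : ℝ, ‖(Real.toNNReal (gaussianPDFReal 0 1 x) : ℝ≥0) • x‖
      ≤ (Real.sqrt (2*π))⁻¹ * Real.exp (-(1/4) * x^2) := by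
    intro x
    rw [NNReal.smul_def, Real.coe_toNNReal _ (gaussianPDFReal_nonneg 0 1 x), smul_eq_mul,
      gaussianPDFReal_zero_one]
    rw [Real.norm_eq_abs, abs_mul, abs_of_nonneg (by positivity : (0:ℝ) ≤ (Real.sqrt (2*π))⁻¹ * Real.exp (-(1/2)*x^2))]
    rw [mul_assoc]
    gcongr
    have h1 : |x| ≤ Real.exp ((1/4) * x^2) := by
      have := Real.add_one_le_exp ((1/4) * x^2)
      nlinarith [sq_nonneg (|x|/2 - 1), sq_abs x, abs_nonneg x]
    calc Real.exp (-(1/2)*x^2) * |x| ≤ Real.exp (-(1/2)*x^2) * Real.exp ((1/4)*x^2) := by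
          gcongr
      _ = Real.exp (-(1/4) * x^2) := by rw [← Real.exp_add]; ring_nf
  refine Integrable.mono' (((integrable_exp_neg_mul_sq (by norm_num : (0:ℝ) < 1/4))).const_mul _) ?_ (Filter.Eventually.of_forall hb)
  exact (((measurable_gaussianPDFReal 0 1).real_toNNReal).coe_nnreal_real.mul measurable_id).aestronglyMeasurable

lemma gaussian_mean : ∫ x, x ∂(gaussianReal 0 1) = 0 := by
  rw [integral_gaussianReal_eq]
  have hodd : ∀ x : ℝ, gaussianPDFReal 0 1 (-x) • (-x) = -(gaussianPDFReal 0 1 x • x) := by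
    intro x
    rw [gaussianPDFReal_zero_one, gaussianPDFReal_zero_one]
    simp only [smul_eq_mul]
    ring
  have := MeasureTheory.integral_neg_eq_self (fun x => gaussianPDFReal 0 1 x • x) (volume : Measure ℝ)
  rw [show (fun x => gaussianPDFReal 0 1 (-x) • (-x)) = fun x => -(gaussianPDFReal 0 1 x • x) from funext hodd] at this
  rw [integral_neg] at this
  linarith

instance stdGaussian_isProb (d : ℕ) : IsProbabilityMeasure (stdGaussian d) := by
  unfold _root_.stdGaussian; infer_instance

lemma stdGaussian_integral_prod (d : ℕ) (f : Fin d → ℝ → ℝ) :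
    ∫ η, ∏ i, f i (η i) ∂(stdGaussian d) = ∏ i, ∫ x, f i x ∂(gaussianReal 0 1) := by
  letI : MeasureSpace ℝ := ⟨gaussianReal 0 1⟩
  haveI : SigmaFinite (volume : Measure ℝ) := inferInstanceAs (SigmaFinite (gaussianReal 0 1))
  exact integral_fintype_prod_eq_prod f

lemma stdGaussian_integrable_prod (d : ℕ) (f : Fin d → ℝ → ℝ)
    (hf : ∀ i, Integrable (f i) (gaussianReal 0 1)) :
    Integrable (fun η => ∏ i, f i (η i)) (stdGaussian d) := by
  letI : MeasureSpace ℝ := ⟨gaussianReal 0 1⟩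
  haveI : SigmaFinite (volume : Measure ℝ) := inferInstanceAs (SigmaFinite (gaussianReal 0 1))
  exact Integrable.fintype_prod (f := f) hf

lemma integrable_exp_lin (d : ℕ) (x : Fin d → ℝ) (t : ℝ) :
    Integrable (fun η => Real.exp (t * ∑ i, x i * η i)) (stdGaussian d) := by
  have h : (fun η : Fin d → ℝ => Real.exp (t * ∑ i, x i * η i))
      = fun η => ∏ i, Real.exp ((t * x i) * η i) := by
    funext η
    rw [Finset.mul_sum, Real.exp_sum]
    congr 1; funext i; ring_nf
  rw [h]
  exact stdGaussian_integrable_prod d _ (fun i => integrable_gaussianReal_exp_mul (t * x i))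

lemma integral_exp_lin (d : ℕ) (x : Fin d → ℝ) (t : ℝ) :
    ∫ η, Real.exp (t * ∑ i, x i * η i) ∂(stdGaussian d)
      = Real.exp (t^2 * (∑ i, (x i)^2) / 2) := by
  have h : (fun η : Fin d → ℝ => Real.exp (t * ∑ i, x i * η i))
      = fun η => ∏ i, Real.exp ((t * x i) * η i) := by
    funext η
    rw [Finset.mul_sum, Real.exp_sum]
    congr 1; funext i; ring_nf
  rw [h, stdGaussian_integral_prod d (fun i s => Real.exp ((t * x i) * s))]
  have h2 : ∀ i : Fin d, ∫ s, Real.exp ((t * x i) * s) ∂(gaussianReal 0 1)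
      = Real.exp ((t * x i)^2 / 2) := fun i => gaussian_mgf (t * x i)
  rw [Finset.prod_congr rfl (fun i _ => h2 i), ← Real.exp_sum]
  congr 1
  rw [← Finset.sum_div, Finset.mul_sum]
  congr 1
  refine Finset.sum_congr rfl (fun i _ => ?_)
  ring

lemma integrable_eval (d : ℕ) (i : Fin d) :
    Integrable (fun η : Fin d → ℝ => η i) (stdGaussian d) := by
  set f : Fin d → ℝ → ℝ := fun j s => if j = i then s else 1 with hf
  have h : (fun η : Fin d → ℝ => η i) = fun η => ∏ j, f j (η j) := by
    funext η
    rw [Finset.prod_eq_single i (fun j _ hj => by simp [hf, hj]) (by simp)]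
    simp [hf]
  rw [h]
  refine stdGaussian_integrable_prod d f (fun j => ?_)
  by_cases hj : j = i
  · simpa [hf, hj] using integrable_gaussianReal_id
  · simpa [hf, hj] using (integrable_const (1 : ℝ))

lemma integral_eval (d : ℕ) (i : Fin d) :
    ∫ η, η i ∂(stdGaussian d) = 0 := by
  set f : Fin d → ℝ → ℝ := fun j s => if j = i then s else 1 with hf
  have h : (fun η : Fin d → ℝ => η i) = fun η => ∏ j, f j (η j) := by
    funext η
    rw [Finset.prod_eq_single i (fun j _ hj => by simp [hf, hj]) (by simp)]
    simp [hf]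
  rw [h, stdGaussian_integral_prod d f]
  refine Finset.prod_eq_zero (Finset.mem_univ i) ?_
  simpa [hf] using gaussian_mean

lemma integrable_lin (d : ℕ) (x : Fin d → ℝ) :
    Integrable (fun η => ∑ i, x i * η i) (stdGaussian d) := by
  refine integrable_finset_sum _ (fun i _ => ?_)
  exact (integrable_eval d i).const_mul (x i)

lemma integral_lin (d : ℕ) (x : Fin d → ℝ) :
    ∫ η, ∑ i, x i * η i ∂(stdGaussian d) = 0 := by
  rw [integral_finset_sum _ (fun i _ => (integrable_eval d i).const_mul (x i))]
  refine Finset.sum_eq_zero (fun i _ => ?_)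
  rw [integral_const_mul, integral_eval, mul_zero]

lemma measurable_lin (d : ℕ) (x : Fin d → ℝ) :
    Measurable (fun η : Fin d → ℝ => ∑ i, x i * η i) := by
  exact Finset.measurable_sum _ (fun i _ => by fun_prop)

lemma key_bound (d : ℕ) (Z : Finset (Fin d → ℝ)) (hZ : Z.Nonempty) (t s : ℝ) (ht : 0 < t)
    (hs : ∀ x ∈ Z, (∑ i, (x i)^2) ≤ s) :
    ∫ η, max (Z.sup' hZ (fun x => ∑ i, x i * η i)) 0 ∂(stdGaussian d)
      ≤ Real.log (1 + Z.card * Real.exp (t^2 * s / 2)) / t := by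
  set g : (Fin d → ℝ) → ℝ := fun η => max (Z.sup' hZ (fun x => ∑ i, x i * η i)) 0 with hg
  have hmeas : Measurable g := by
    refine Measurable.max ?_ measurable_const
    have h := Finset.measurable_sup' hZ (fun (x : Fin d → ℝ) (_ : x ∈ Z) => measurable_lin d x)
    have heq : (fun η : Fin d → ℝ => Z.sup' hZ fun x => ∑ i, x i * η i)
        = Z.sup' hZ (fun (x : Fin d → ℝ) (η : Fin d → ℝ) => ∑ i, x i * η i) := by
      funext η; rw [Finset.sup'_apply]
    rw [heq]
    exact h
  have hg_nonneg : ∀ η, 0 ≤ g η := fun η => le_max_right _ _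
  -- domination by sum of abs
  set S : (Fin d → ℝ) → ℝ := fun η => ∑ x ∈ Z, |∑ i, x i * η i| with hS
  have hS_int : Integrable S (stdGaussian d) :=
    integrable_finset_sum _ (fun x _ => (integrable_lin d x).abs)
  have hgS : ∀ η, g η ≤ S η := by
    intro η
    refine max_le (Finset.sup'_le hZ _ (fun x hx => ?_))
      (Finset.sum_nonneg (fun x _ => abs_nonneg _))
    exact le_trans (le_abs_self _)
      (Finset.single_le_sum (fun (y : Fin d → ℝ) (_ : y ∈ Z) =>
        abs_nonneg (∑ i, y i * η i)) hx)
  have hg_int : Integrable g (stdGaussian d) := by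
    refine hS_int.mono' hmeas.aestronglyMeasurable (Filter.Eventually.of_forall (fun η => ?_))
    rw [Real.norm_eq_abs, abs_of_nonneg (hg_nonneg η)]
    exact hgS η
  -- pointwise bound for exp (t * g)
  set B : (Fin d → ℝ) → ℝ := fun η => 1 + ∑ x ∈ Z, Real.exp (t * ∑ i, x i * η i) with hB
  have hB_int : Integrable B (stdGaussian d) :=
    (integrable_const 1).add (integrable_finset_sum _ (fun x _ => integrable_exp_lin d x t))
  have hpt : ∀ η, Real.exp (t * g η) ≤ B η := by
    intro η
    have hsum_nonneg : (0:ℝ) ≤ ∑ x ∈ Z, Real.exp (t * ∑ i, x i * η i) :=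
      Finset.sum_nonneg (fun x _ => (Real.exp_pos _).le)
    rcases le_or_gt (Z.sup' hZ (fun x => ∑ i, x i * η i)) 0 with h0 | h0
    · have : g η = 0 := max_eq_right h0
      rw [this, mul_zero, Real.exp_zero]
      simp only [hB]
      linarith
    · have hgval : g η = Z.sup' hZ (fun x => ∑ i, x i * η i) := max_eq_left h0.le
      obtain ⟨x₀, hx₀, heq⟩ := Finset.exists_mem_eq_sup' hZ (fun x => ∑ i, x i * η i)
      rw [hgval, heq]
      have h1 : Real.exp (t * ∑ i, x₀ i * η i)
          ≤ ∑ x ∈ Z, Real.exp (t * ∑ i, x i * η i) :=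
        Finset.single_le_sum (fun (y : Fin d → ℝ) (_ : y ∈ Z) =>
          (Real.exp_pos (t * ∑ i, y i * η i)).le) hx₀
      simp only [hB]
      linarith
  -- Jensen
  have hjensen : Real.exp (t * ∫ η, g η ∂(stdGaussian d))
      ≤ ∫ η, Real.exp (t * g η) ∂(stdGaussian d) := by
    have := convexOn_exp.map_integral_le (μ := stdGaussian d) (f := fun η => t * g η)
      continuous_exp.continuousOn isClosed_univ
      (Filter.Eventually.of_forall (fun η => Set.mem_univ _))
      (hg_int.const_mul t) ?_
    · rwa [integral_const_mul] at this
    · refine hB_int.mono' ?_ (Filter.Eventually.of_forall (fun η => ?_))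
      · exact (Real.measurable_exp.comp (hmeas.const_mul t)).aestronglyMeasurable
      · simp only [Function.comp_apply, Real.norm_eq_abs]
        rw [abs_of_nonneg (Real.exp_pos _).le]
        exact hpt η
  have hintB : ∫ η, Real.exp (t * g η) ∂(stdGaussian d)
      ≤ 1 + Z.card * Real.exp (t^2 * s / 2) := by
    have h1 : ∫ η, Real.exp (t * g η) ∂(stdGaussian d) ≤ ∫ η, B η ∂(stdGaussian d) := by
      refine integral_mono ?_ hB_int hpt
      refine hB_int.mono' ?_ (Filter.Eventually.of_forall (fun η => ?_))
      · exact (Real.measurable_exp.comp (hmeas.const_mul t)).aestronglyMeasurable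
      · rw [Real.norm_eq_abs, abs_of_nonneg (Real.exp_pos _).le]
        exact hpt η
    have h2 : ∫ η, B η ∂(stdGaussian d)
        = 1 + ∑ x ∈ Z, Real.exp (t^2 * (∑ i, (x i)^2) / 2) := by
      rw [hB]
      rw [integral_add (integrable_const 1)
        (integrable_finset_sum _ (fun x _ => integrable_exp_lin d x t))]
      rw [integral_const]
      simp only [probReal_univ, smul_eq_mul, one_mul]
      rw [integral_finset_sum _ (fun x _ => integrable_exp_lin d x t)]
      congr 1
      exact Finset.sum_congr rfl (fun x _ => integral_exp_lin d x t)
    have h3 : ∑ x ∈ Z, Real.exp (t^2 * (∑ i, (x i)^2) / 2)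
        ≤ Z.card * Real.exp (t^2 * s / 2) := by
      calc ∑ x ∈ Z, Real.exp (t^2 * (∑ i, (x i)^2) / 2)
          ≤ ∑ _x ∈ Z, Real.exp (t^2 * s / 2) := by
            refine Finset.sum_le_sum (fun x hx => ?_)
            refine Real.exp_le_exp.mpr ?_
            have := hs x hx
            nlinarith [sq_nonneg t]
        _ = Z.card * Real.exp (t^2 * s / 2) := by
            rw [Finset.sum_const, nsmul_eq_mul]
    linarith
  -- conclude
  have hpos : (0:ℝ) < 1 + Z.card * Real.exp (t^2 * s / 2) := by positivity
  have hlog : t * ∫ η, g η ∂(stdGaussian d) ≤ Real.log (1 + Z.card * Real.exp (t^2 * s / 2)) := by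
    have := Real.log_le_log (Real.exp_pos _) (le_trans hjensen hintB)
    rwa [Real.log_exp] at this
  rw [le_div_iff₀ ht]
  linarith

lemma card_binary_le (d k : ℕ) (Z : Finset (Fin d → ℝ))
    (hbin : ∀ x ∈ Z, (∀ i, x i = 0 ∨ x i = 1) ∧ ∑ i, x i = (k : ℝ)) :
    (Z.card : ℝ) ≤ (d : ℝ) ^ k := by
  classical
  have h : Z.card ≤ d ^ k := by
    set φ : (Fin d → ℝ) → Finset (Fin d) := fun x => Finset.univ.filter (fun i => x i = 1)
      with hφ
    have hcardφ : ∀ x ∈ Z, (φ x).card = k := by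
      intro x hx
      have hsum : ((φ x).card : ℝ) = ∑ i, x i := by
        rw [hφ]; simp only
        rw [Finset.card_filter]
        push_cast
        refine (Finset.sum_congr rfl (fun i _ => ?_)).symm
        rcases (hbin x hx).1 i with h0 | h1
        · simp [h0]
        · simp [h1]
      have h2 : ((φ x).card : ℝ) = (k : ℝ) := by rw [hsum, (hbin x hx).2]
      exact_mod_cast h2
    have hinj : Set.InjOn φ Z := by
      intro x hx y hy hxy
      funext i
      have hiff : x i = 1 ↔ y i = 1 := by
        constructor
        · intro h1
          have : i ∈ φ x := by simp [hφ, h1]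
          rw [hxy] at this
          simpa [hφ] using this
        · intro h1
          have : i ∈ φ y := by simp [hφ, h1]
          rw [← hxy] at this
          simpa [hφ] using this
      rcases (hbin x hx).1 i with h0 | h1 <;> rcases (hbin y hy).1 i with g0 | g1
      · rw [h0, g0]
      · rw [hiff.mpr g1, g1]
      · rw [h1, (hiff.mp h1)]
      · rw [h1, g1]
    calc Z.card = (Z.image φ).card := (Finset.card_image_of_injOn hinj).symm
      _ ≤ (Finset.powersetCard k (Finset.univ : Finset (Fin d))).card := by
          refine Finset.card_le_card ?_
          intro sset hs
          obtain ⟨x, hx, rfl⟩ := Finset.mem_image.mp hs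
          exact Finset.mem_powersetCard_univ.mpr (hcardφ x hx)
      _ = (Fintype.card (Fin d)).choose k := by
          rw [Finset.card_powersetCard, Finset.card_univ]
      _ = d.choose k := by rw [Fintype.card_fin]
      _ ≤ d ^ k := Nat.choose_le_pow d k
  calc (Z.card : ℝ) ≤ ((d ^ k : ℕ) : ℝ) := by exact_mod_cast h
    _ = (d : ℝ) ^ k := by push_cast; ring

lemma measurable_sup_lin (d : ℕ) (Z : Finset (Fin d → ℝ)) (hZ : Z.Nonempty) :
    Measurable (fun η : Fin d → ℝ => Z.sup' hZ (fun x => ∑ i, x i * η i)) := by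
  have h := Finset.measurable_sup' hZ (fun (x : Fin d → ℝ) (_ : x ∈ Z) => measurable_lin d x)
  have heq : (fun η : Fin d → ℝ => Z.sup' hZ fun x => ∑ i, x i * η i)
      = Z.sup' hZ (fun (x : Fin d → ℝ) (η : Fin d → ℝ) => ∑ i, x i * η i) := by
    funext η; rw [Finset.sup'_apply]
  rw [heq]
  exact h

lemma integrable_sup_lin (d : ℕ) (Z : Finset (Fin d → ℝ)) (hZ : Z.Nonempty) :
    Integrable (fun η : Fin d → ℝ => Z.sup' hZ (fun x => ∑ i, x i * η i)) (stdGaussian d) := by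
  have hS_int : Integrable (fun η => ∑ x ∈ Z, |∑ i, x i * η i|) (stdGaussian d) :=
    integrable_finset_sum _ (fun x _ => (integrable_lin d x).abs)
  refine hS_int.mono' (measurable_sup_lin d Z hZ).aestronglyMeasurable
    (Filter.Eventually.of_forall (fun η => ?_))
  rw [Real.norm_eq_abs, abs_le]
  constructor
  · rw [neg_le]
    obtain ⟨x₀, hx₀, heq⟩ := Finset.exists_mem_eq_sup' hZ (fun x => ∑ i, x i * η i)
    rw [heq]
    calc -(∑ i, x₀ i * η i) ≤ |∑ i, x₀ i * η i| := neg_le_abs _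
      _ ≤ ∑ x ∈ Z, |∑ i, x i * η i| :=
        Finset.single_le_sum (fun (y : Fin d → ℝ) (_ : y ∈ Z) =>
          abs_nonneg (∑ i, y i * η i)) hx₀
  · refine Finset.sup'_le hZ _ (fun x hx => ?_)
    exact le_trans (le_abs_self _)
      (Finset.single_le_sum (fun (y : Fin d → ℝ) (_ : y ∈ Z) =>
        abs_nonneg (∑ i, y i * η i)) hx)

lemma prop5_part1 (d k : ℕ) (hd : 3 ≤ d) (hk1 : 1 ≤ k) (hkd : k ≤ d)
    (Y : Finset (Fin d → ℝ)) (h1 : (fun _ => (1 : ℝ)) ∈ Y)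
    (hY : ∀ x ∈ Y, ((∀ i, x i = 0 ∨ x i = 1) ∧ ∑ i, x i = (k : ℝ)) ∨ x = fun _ => (1 : ℝ)) :
    (∫ η, Y.sup' ⟨_, h1⟩ (fun x => ∑ i, x i * η i) ∂ stdGaussian d) ^ 2
      ≤ 18 * ((k : ℝ) ^ 2 * Real.log d + d) := by
  have hd3 : (3:ℝ) ≤ (d:ℝ) := by exact_mod_cast hd
  have hd0 : (0:ℝ) < d := by linarith
  have hk0 : (1:ℝ) ≤ (k:ℝ) := by exact_mod_cast hk1
  have hlogd : 1 ≤ Real.log d := by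
    rw [Real.le_log_iff_exp_le hd0]
    have h9 := Real.exp_one_lt_d9
    linarith
  have hYne : Y.Nonempty := ⟨_, h1⟩
  have hRHS : 0 ≤ 18 * ((k:ℝ)^2 * Real.log d + d) := by nlinarith [sq_nonneg (k:ℝ)]
  have hM_int : Integrable (fun η : Fin d → ℝ => Y.sup' ⟨_, h1⟩ (fun x => ∑ i, x i * η i))
      (stdGaussian d) := integrable_sup_lin d Y ⟨_, h1⟩
  have hMlow : 0 ≤ ∫ η, Y.sup' ⟨_, h1⟩ (fun x => ∑ i, x i * η i) ∂ stdGaussian d := by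
    have h0 : ∫ η, ∑ i, (fun _ => (1:ℝ)) i * η i ∂ stdGaussian d = 0 :=
      integral_lin d (fun _ => (1:ℝ))
    have hle : ∫ η, ∑ i, (fun _ => (1:ℝ)) i * η i ∂ stdGaussian d
        ≤ ∫ η, Y.sup' ⟨_, h1⟩ (fun x => ∑ i, x i * η i) ∂ stdGaussian d := by
      refine integral_mono (integrable_lin d _) hM_int (fun η => ?_)
      exact Finset.le_sup' (fun x => ∑ i, x i * η i) h1
    linarith
  rcases (Y.erase (fun _ => (1:ℝ))).eq_empty_or_nonempty with hZe | hZne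
  · -- Y = {1}
    have hYsingle : Y = {fun _ => (1:ℝ)} := by
      rcases (Finset.erase_eq_empty_iff Y _).mp hZe with h | h
      · exact absurd h1 (h ▸ Finset.notMem_empty _)
      · exact h
    have h2 : ∀ η : Fin d → ℝ, Y.sup' ⟨_, h1⟩ (fun x => ∑ i, x i * η i)
        = ∑ i, (fun _ => (1:ℝ)) i * η i := by
      intro η
      refine le_antisymm (Finset.sup'_le _ _ (fun x hx => ?_))
        (Finset.le_sup' (fun x => ∑ i, x i * η i) h1)
      have hx1 : x = fun _ => (1:ℝ) := by
        rw [hYsingle] at hx; simpa using hx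
      rw [hx1]
    rw [show (fun η : Fin d → ℝ => Y.sup' ⟨_, h1⟩ fun x => ∑ i, x i * η i)
      = (fun η : Fin d → ℝ => ∑ i, (fun _ => (1:ℝ)) i * η i) from funext h2]
    rw [integral_lin d (fun _ => (1:ℝ))]
    simpa using hRHS
  · -- main case
    set Z := Y.erase (fun _ => (1:ℝ)) with hZdef
    have hbin : ∀ x ∈ Z, (∀ i, x i = 0 ∨ x i = 1) ∧ ∑ i, x i = (k : ℝ) := by
      intro x hx
      obtain ⟨hne, hxY⟩ := Finset.mem_erase.mp hx
      rcases hY x hxY with h | h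
      · exact h
      · exact absurd h hne
    have hsq : ∀ x ∈ Z, ∑ i, (x i)^2 ≤ (k:ℝ) := by
      intro x hx
      have : ∑ i, (x i)^2 = ∑ i, x i := by
        refine Finset.sum_congr rfl (fun i _ => ?_)
        rcases (hbin x hx).1 i with h | h <;> rw [h] <;> norm_num
      rw [this, (hbin x hx).2]
    set Z₁ : Finset (Fin d → ℝ) := {fun _ => (1:ℝ)} with hZ₁def
    have hZ₁ : Z₁.Nonempty := Finset.singleton_nonempty _
    have hsq1 : ∀ x ∈ Z₁, ∑ i, (x i)^2 ≤ (d:ℝ) := by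
      intro x hx
      have hx1 : x = fun _ => (1:ℝ) := by simpa [hZ₁def] using hx
      rw [hx1]
      simp
    -- bound for the all-ones singleton
    set t₁ : ℝ := (Real.sqrt d)⁻¹ with ht₁def
    have hsd : 0 < Real.sqrt d := Real.sqrt_pos.mpr hd0
    have ht₁ : 0 < t₁ := inv_pos.mpr hsd
    have KB1 := key_bound d Z₁ hZ₁ t₁ d ht₁ hsq1
    have ht₁sq : t₁^2 * d / 2 = 1/2 := by
      rw [ht₁def, inv_pow, Real.sq_sqrt hd0.le]
      field_simp
    have hcard1 : (Z₁.card : ℝ) = 1 := by rw [hZ₁def]; simp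
    have hB1 : Real.log (1 + (Z₁.card : ℝ) * Real.exp (t₁^2 * (d:ℝ) / 2)) ≤ 1 := by
      rw [hcard1, one_mul, ht₁sq]
      have hEsq : Real.exp (1/2) * Real.exp (1/2) = Real.exp 1 := by
        rw [← Real.exp_add]; norm_num
      have hexp : (1:ℝ) + Real.exp (1/2) ≤ Real.exp 1 := by
        nlinarith [Real.exp_one_lt_d9, Real.exp_one_gt_d9, (Real.exp_pos (1/2:ℝ)).le,
          sq_nonneg (Real.exp (1/2) - 1.65)]
      calc Real.log (1 + Real.exp (1/2)) ≤ Real.log (Real.exp 1) :=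
            Real.log_le_log (by positivity) hexp
        _ = 1 := Real.log_exp 1
    have hI1 : ∫ η, max (Z₁.sup' hZ₁ (fun x => ∑ i, x i * η i)) 0 ∂ stdGaussian d
        ≤ Real.sqrt d := by
      refine le_trans KB1 ?_
      calc Real.log (1 + (Z₁.card:ℝ) * Real.exp (t₁^2 * (d:ℝ) / 2)) / t₁ ≤ 1 / t₁ := by
            gcongr
        _ = Real.sqrt d := by rw [ht₁def, one_div, inv_inv]
    -- bound for the k-sparse part
    set t₂ : ℝ := Real.sqrt (Real.log d) with ht₂def
    have hlog0 : (0:ℝ) < Real.log d := by linarith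
    have ht₂ : 0 < t₂ := Real.sqrt_pos.mpr hlog0
    have KB2 := key_bound d Z hZne t₂ k ht₂ hsq
    have ht₂sq : t₂^2 = Real.log d := Real.sq_sqrt hlog0.le
    set D : ℝ := (d:ℝ)^k with hDdef
    have hD3 : (3:ℝ) ≤ D := le_trans hd3 (le_self_pow₀ (by linarith) (by omega))
    have hcardZ : (Z.card : ℝ) ≤ D := card_binary_le d k Z hbin
    have hexp2 : Real.exp (t₂^2 * (k:ℝ) / 2) ≤ D := by
      rw [ht₂sq]
      have h1 : Real.log d * (k:ℝ) / 2 ≤ (k:ℝ) * Real.log d := by nlinarith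
      calc Real.exp (Real.log d * (k:ℝ) / 2) ≤ Real.exp ((k:ℝ) * Real.log d) :=
            Real.exp_le_exp.mpr h1
        _ = Real.exp (Real.log d) ^ k := by
            rw [← Real.exp_nat_mul]
        _ = D := by rw [Real.exp_log hd0, hDdef]
    have hB2 : Real.log (1 + (Z.card:ℝ) * Real.exp (t₂^2 * (k:ℝ) / 2)) ≤ 3 * ((k:ℝ) * Real.log d) := by
      have harg : (1:ℝ) + (Z.card:ℝ) * Real.exp (t₂^2 * (k:ℝ) / 2) ≤ D^3 := by
        have hprod : (Z.card:ℝ) * Real.exp (t₂^2 * (k:ℝ) / 2) ≤ D * D := by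
          refine mul_le_mul hcardZ hexp2 (Real.exp_pos _).le (by linarith)
        nlinarith
      calc Real.log (1 + (Z.card:ℝ) * Real.exp (t₂^2 * (k:ℝ) / 2)) ≤ Real.log (D^3) :=
            Real.log_le_log (by positivity) harg
        _ = 3 * ((k:ℝ) * Real.log d) := by
            rw [Real.log_pow, hDdef, Real.log_pow]; push_cast; ring
    have hI2 : ∫ η, max (Z.sup' hZne (fun x => ∑ i, x i * η i)) 0 ∂ stdGaussian d
        ≤ 3 * (k:ℝ) * Real.sqrt (Real.log d) := by
      refine le_trans KB2 ?_
      calc Real.log (1 + (Z.card:ℝ) * Real.exp (t₂^2 * (k:ℝ) / 2)) / t₂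
          ≤ (3 * ((k:ℝ) * Real.log d)) / t₂ := by gcongr
        _ = 3 * (k:ℝ) * (Real.log d / t₂) := by ring
        _ = 3 * (k:ℝ) * Real.sqrt (Real.log d) := by rw [ht₂def, Real.div_sqrt]
    -- pointwise bound
    have hpt : ∀ η : Fin d → ℝ, Y.sup' ⟨_, h1⟩ (fun x => ∑ i, x i * η i)
        ≤ max (Z₁.sup' hZ₁ (fun x => ∑ i, x i * η i)) 0
          + max (Z.sup' hZne (fun x => ∑ i, x i * η i)) 0 := by
      intro η
      refine Finset.sup'_le _ _ (fun x hx => ?_)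
      by_cases hx1 : x = fun _ => (1:ℝ)
      · have hmem : x ∈ Z₁ := by rw [hZ₁def, hx1]; exact Finset.mem_singleton_self _
        have : (∑ i, x i * η i) ≤ max (Z₁.sup' hZ₁ (fun x => ∑ i, x i * η i)) 0 :=
          le_trans (Finset.le_sup' (fun x => ∑ i, x i * η i) hmem) (le_max_left _ _)
        linarith [le_max_right (Z.sup' hZne (fun x => ∑ i, x i * η i)) (0:ℝ)]
      · have hmem : x ∈ Z := Finset.mem_erase.mpr ⟨hx1, hx⟩
        have : (∑ i, x i * η i) ≤ max (Z.sup' hZne (fun x => ∑ i, x i * η i)) 0 :=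
          le_trans (Finset.le_sup' (fun x => ∑ i, x i * η i) hmem) (le_max_left _ _)
        linarith [le_max_right (Z₁.sup' hZ₁ (fun x => ∑ i, x i * η i)) (0:ℝ)]
    have hint1 : Integrable (fun η : Fin d → ℝ =>
        max (Z₁.sup' hZ₁ (fun x => ∑ i, x i * η i)) 0) (stdGaussian d) :=
      (integrable_sup_lin d Z₁ hZ₁).pos_part
    have hint2 : Integrable (fun η : Fin d → ℝ =>
        max (Z.sup' hZne (fun x => ∑ i, x i * η i)) 0) (stdGaussian d) :=
      (integrable_sup_lin d Z hZne).pos_part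
    have hIle : ∫ η, Y.sup' ⟨_, h1⟩ (fun x => ∑ i, x i * η i) ∂ stdGaussian d
        ≤ Real.sqrt d + 3 * (k:ℝ) * Real.sqrt (Real.log d) := by
      calc ∫ η, Y.sup' ⟨_, h1⟩ (fun x => ∑ i, x i * η i) ∂ stdGaussian d
          ≤ ∫ η, (max (Z₁.sup' hZ₁ (fun x => ∑ i, x i * η i)) 0
              + max (Z.sup' hZne (fun x => ∑ i, x i * η i)) 0) ∂ stdGaussian d :=
            integral_mono hM_int (hint1.add hint2) hpt
        _ = (∫ η, max (Z₁.sup' hZ₁ (fun x => ∑ i, x i * η i)) 0 ∂ stdGaussian d)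
              + ∫ η, max (Z.sup' hZne (fun x => ∑ i, x i * η i)) 0 ∂ stdGaussian d :=
            integral_add hint1 hint2
        _ ≤ Real.sqrt d + 3 * (k:ℝ) * Real.sqrt (Real.log d) := add_le_add hI1 hI2
    -- conclude
    set I := ∫ η, Y.sup' ⟨_, h1⟩ (fun x => ∑ i, x i * η i) ∂ stdGaussian d with hIdef
    have ha : Real.sqrt d ^ 2 = (d:ℝ) := Real.sq_sqrt hd0.le
    have hb : Real.sqrt (Real.log d) ^ 2 = Real.log d := Real.sq_sqrt hlog0.le
    have hsqI : I^2 ≤ (Real.sqrt d + 3 * (k:ℝ) * Real.sqrt (Real.log d))^2 :=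
      pow_le_pow_left₀ hMlow hIle 2
    nlinarith [hsqI, ha, hb, sq_nonneg (Real.sqrt d - 3 * (k:ℝ) * Real.sqrt (Real.log d)),
      Real.sqrt_nonneg (d:ℝ), Real.sqrt_nonneg (Real.log d), hk0, hd0.le, hlogd,
      sq_nonneg ((k:ℝ) * Real.sqrt (Real.log d))]

lemma prop5_part2 (d : ℕ) (hd : 3 ≤ d) (θ : Fin d → ℝ) (hθ : ∀ i, 0 ≤ θ i)
    (ε : ℝ) (hε : 0 < ε) :
    ∃ Y : Finset (Fin d → ℝ),
      (↑Y = {x : Fin d → ℝ |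
          ((∀ i, x i = 0 ∨ x i = 1) ∧ ∑ i, x i = ((⌈Real.sqrt d⌉₊ : ℕ) : ℝ)) ∨
            x = fun _ => (1 : ℝ)} ∩
        {x : Fin d → ℝ | ∑ i, θ i * (1 - x i) ≤ ε}) ∧
      ∃ hY : Y.Nonempty,
      ∃ w : (Fin d → ℝ) → ℝ,
        (∀ x ∈ Y, 0 ≤ w x) ∧ (∑ x ∈ Y, w x = 1) ∧
        (∀ i : Fin d, 0 < ∑ x ∈ Y, w x * x i) ∧
        (∫ η, Y.sup' hY
            (fun x => ∑ i, x i * η i / Real.sqrt (∑ y ∈ Y, w y * y i))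
            ∂ stdGaussian d) ^ 2
          ≤ 90 * (d : ℝ) * Real.log d := by
  classical
  have hd3 : (3:ℝ) ≤ (d:ℝ) := by exact_mod_cast hd
  have hd0 : (0:ℝ) < d := by linarith
  have hlogd : 1 ≤ Real.log d := by
    rw [Real.le_log_iff_exp_le hd0]
    have h9 := Real.exp_one_lt_d9
    linarith
  set k : ℕ := ⌈Real.sqrt d⌉₊ with hkdef
  set S : Set (Fin d → ℝ) := {x : Fin d → ℝ |
      ((∀ i, x i = 0 ∨ x i = 1) ∧ ∑ i, x i = ((k : ℕ) : ℝ)) ∨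
        x = fun _ => (1 : ℝ)} ∩
      {x : Fin d → ℝ | ∑ i, θ i * (1 - x i) ≤ ε} with hSdef
  have hfin : S.Finite := by
    have hsub : S ⊆ Set.pi Set.univ (fun _ : Fin d => ({0, 1} : Set ℝ)) := by
      intro x hx i _
      rcases hx.1 with h | h
      · rcases h.1 i with h0 | h1
        · exact Or.inl h0
        · exact Or.inr h1
      · right; rw [h]; rfl
    exact (Set.Finite.pi (fun _ => (Set.finite_singleton (1:ℝ)).insert 0)).subset hsub
  refine ⟨hfin.toFinset, ?_, ?_⟩
  · rw [Set.Finite.coe_toFinset]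
  · set Y : Finset (Fin d → ℝ) := hfin.toFinset with hYdef
    have hmemY : ∀ x, x ∈ Y ↔ x ∈ S := fun x => Set.Finite.mem_toFinset hfin
    have h1 : (fun _ => (1:ℝ)) ∈ Y := by
      rw [hmemY]
      constructor
      · exact Or.inr rfl
      · simp only [Set.mem_setOf_eq]
        have : ∑ i, θ i * (1 - (1:ℝ)) = 0 := by simp
        simpa [this] using hε.le
    have hYne : Y.Nonempty := ⟨_, h1⟩
    set o : Fin d → ℝ := fun _ => (1:ℝ) with hodef
    set w : (Fin d → ℝ) → ℝ := fun x => if x = o then (1:ℝ) else 0 with hwdef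
    have hsumw : ∀ i : Fin d, ∑ x ∈ Y, w x * x i = 1 := by
      intro i
      have : ∀ x ∈ Y, w x * x i = if x = o then (1:ℝ) else 0 := by
        intro x _
        by_cases hx : x = o
        · rw [hwdef]; simp [hx, hodef]
        · rw [hwdef]; simp [hx]
      rw [Finset.sum_congr rfl this, Finset.sum_ite_eq' Y o (fun _ => (1:ℝ)), if_pos h1]
    refine ⟨hYne, w, ?_, ?_, ?_, ?_⟩
    · intro x _
      rw [hwdef]
      by_cases hx : x = o <;> simp [hx]
    · have : ∀ x ∈ Y, w x = if x = o then (1:ℝ) else 0 := fun x _ => rfl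
      rw [Finset.sum_congr rfl this, Finset.sum_ite_eq' Y o (fun _ => (1:ℝ)), if_pos h1]
    · intro i
      rw [hsumw i]
      norm_num
    · -- rewrite the integrand
      have hinteg : (fun η : Fin d → ℝ => Y.sup' hYne
          (fun x => ∑ i, x i * η i / Real.sqrt (∑ y ∈ Y, w y * y i)))
          = fun η : Fin d → ℝ => Y.sup' hYne (fun x => ∑ i, x i * η i) := by
        funext η
        refine Finset.sup'_congr hYne rfl (fun x _ => ?_)
        refine Finset.sum_congr rfl (fun i _ => ?_)
        rw [hsumw i, Real.sqrt_one, div_one]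
      rw [hinteg]
      -- apply part 1
      have hk1 : 1 ≤ k := Nat.ceil_pos.mpr (Real.sqrt_pos.mpr hd0)
      have hsqrt_le : Real.sqrt d ≤ (d:ℝ) := by
        have h1' : Real.sqrt d ≤ Real.sqrt ((d:ℝ)^2) := Real.sqrt_le_sqrt (by nlinarith)
        rwa [Real.sqrt_sq hd0.le] at h1'
      have hkd : k ≤ d := by
        rw [hkdef]
        exact Nat.ceil_le.mpr (by exact_mod_cast hsqrt_le)
      have hYstruct : ∀ x ∈ Y, ((∀ i, x i = 0 ∨ x i = 1) ∧ ∑ i, x i = (k : ℝ))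
          ∨ x = fun _ => (1 : ℝ) := by
        intro x hx
        exact ((hmemY x).mp hx).1
      have hpart1 := prop5_part1 d k hd hk1 hkd Y h1 hYstruct
      refine le_trans hpart1 ?_
      -- 18 (k² log d + d) ≤ 90 d log d
      have hkb : (k:ℝ) ≤ Real.sqrt d + 1 := by
        rw [hkdef]
        exact (Nat.ceil_lt_add_one (Real.sqrt_nonneg ((d:ℝ)))).le
      have hsq : Real.sqrt d ^ 2 = (d:ℝ) := Real.sq_sqrt hd0.le
      have hk2 : (k:ℝ)^2 ≤ 4 * d := by
        nlinarith [Real.sqrt_nonneg (d:ℝ), (Nat.cast_nonneg k : (0:ℝ) ≤ (k:ℝ)), hsqrt_le]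
      have hdlog : (d:ℝ) ≤ (d:ℝ) * Real.log d := by nlinarith
      have hklog : (k:ℝ)^2 * Real.log d ≤ 4 * d * Real.log d := by nlinarith
      nlinarith

end Aux

/-- **Proposition 5.** There is a universal constant `c > 0` such that for every `d ≥ 3`,
`1 ≤ k ≤ d` and every `Y` with `1_d ∈ Y ⊆ {x ∈ {0,1}^d : ‖x‖₁ = k} ∪ {1_d}`,
`(E_η[max_{x∈Y} xᵀη])² ≤ c (k² log d + d)`.  In particular (second conjunct), there is a
universal constant `c > 0` such that for `d ≥ 3`, `k = ⌈√d⌉` and the arm set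
`X = {x ∈ {0,1}^d : ‖x‖₁ = k} ∪ {1_d}`, for every `θ*` with nonnegative coordinates
(for which `1_d` is optimal, with gaps `Δ_x = θ*ᵀ(1_d - x)`), and every `ε > 0`, there is a
probability vector on the sublevel set `X_ε = {x ∈ X : Δ_x ≤ ε}` whose squared Gaussian
width is at most `c · d · log d`; hence `γ̄(A_semi) ≤ c · d · log d`. -/
theorem gaussian_width_topk_plus_allones :
    (∃ c : ℝ, 0 < c ∧
      ∀ (d k : ℕ), 3 ≤ d → 1 ≤ k → k ≤ d →
      ∀ (Y : Finset (Fin d → ℝ)) (h1 : (fun _ => (1 : ℝ)) ∈ Y),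
        (∀ x ∈ Y, ((∀ i, x i = 0 ∨ x i = 1) ∧ ∑ i, x i = (k : ℝ)) ∨
          x = fun _ => (1 : ℝ)) →
        (∫ η, Y.sup' ⟨_, h1⟩ (fun x => ∑ i, x i * η i) ∂ stdGaussian d) ^ 2
          ≤ c * ((k : ℝ) ^ 2 * Real.log d + d)) ∧
    (∃ c : ℝ, 0 < c ∧
      ∀ (d : ℕ), 3 ≤ d →
      ∀ θ : Fin d → ℝ, (∀ i, 0 ≤ θ i) →
      ∀ ε : ℝ, 0 < ε →
      ∃ Y : Finset (Fin d → ℝ),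
        (↑Y = {x : Fin d → ℝ |
            ((∀ i, x i = 0 ∨ x i = 1) ∧ ∑ i, x i = ((⌈Real.sqrt d⌉₊ : ℕ) : ℝ)) ∨
              x = fun _ => (1 : ℝ)} ∩
          {x : Fin d → ℝ | ∑ i, θ i * (1 - x i) ≤ ε}) ∧
        ∃ hY : Y.Nonempty,
        ∃ w : (Fin d → ℝ) → ℝ,
          (∀ x ∈ Y, 0 ≤ w x) ∧ (∑ x ∈ Y, w x = 1) ∧
          (∀ i : Fin d, 0 < ∑ x ∈ Y, w x * x i) ∧
          (∫ η, Y.sup' hY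
              (fun x => ∑ i, x i * η i / Real.sqrt (∑ y ∈ Y, w y * y i))
              ∂ stdGaussian d) ^ 2
            ≤ c * (d : ℝ) * Real.log d) := by
  constructor
  · exact ⟨18, by norm_num, fun d k hd hk1 hkd Y h1 hY => prop5_part1 d k hd hk1 hkd Y h1 hY⟩
  · exact ⟨90, by norm_num, fun d hd θ hθ ε hε => prop5_part2 d hd θ hθ ε hε⟩
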